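/- Fix t ∈ (0,T] and fix η, ρ, T, x. Regarding the optimal portfolio X*(t) as a function of the temporary impact parameter γ (through k, a, b, c), one has, as γ → ∞ (equivalently as the ratio γ/η → ∞), X*(t) → x − (x/(ρT + 2))·(H₀(t) + ρt + H_T(t)), where H_a denotes the Heaviside function H_a(s) = 1 if s ≥ a and 0 otherwise; explicitly, the limit equals x − x(1 + ρt)/(ρT + 2) for 0 < t < T and equals 0 for t = T. -/

import Mathlib

open Filter Real

private lemma sqrt_tendsto_atTop : Filter.Tendsto Real.sqrt Filter.atTop Filter.atTop := by
  apply Filter.tendsto_atTop_atTop.2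
  intro b
  refine ⟨(max b 0) ^ 2, fun y hy => le_trans (le_max_left b 0) ?_⟩
  rw [← Real.sqrt_sq (le_max_right b 0)]
  exact Real.sqrt_le_sqrt hy

private lemma coth_tendsto_one :
    Filter.Tendsto (fun y : ℝ => Real.cosh y / Real.sinh y) Filter.atTop (nhds 1) := by
  have hexp : Filter.Tendsto (fun y : ℝ => Real.exp (-(2 * y))) Filter.atTop (nhds 0) :=
    Real.tendsto_exp_atBot.comp (by
      have : Filter.Tendsto (fun y : ℝ => 2 * y) Filter.atTop Filter.atTop :=
        Filter.Tendsto.const_mul_atTop two_pos Filter.tendsto_id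
      exact Filter.tendsto_neg_atBot_iff.mpr this)
  have hmain : Filter.Tendsto (fun y : ℝ => (1 + Real.exp (-(2 * y))) / (1 - Real.exp (-(2 * y))))
      Filter.atTop (nhds 1) := by
    have h1 : Filter.Tendsto (fun y : ℝ => (1:ℝ) + Real.exp (-(2 * y))) Filter.atTop
        (nhds (1 + 0)) := tendsto_const_nhds.add hexp
    have h2 : Filter.Tendsto (fun y : ℝ => (1:ℝ) - Real.exp (-(2 * y))) Filter.atTop
        (nhds (1 - 0)) := tendsto_const_nhds.sub hexp
    have := h1.div h2 (by norm_num)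
    norm_num at this
    exact this
  refine hmain.congr' ?_
  filter_upwards [Filter.eventually_gt_atTop 0] with y hy
  have hs : Real.sinh y > 0 := Real.sinh_pos_iff.2 hy
  have he : Real.exp (-(2 * y)) < 1 := by
    rw [Real.exp_lt_one_iff]; linarith
  rw [Real.cosh_eq, Real.sinh_eq]
  have hey : Real.exp y > 0 := Real.exp_pos y
  have h2 : Real.exp (-(2 * y)) = Real.exp (-y) / Real.exp y := by
    rw [← Real.exp_sub]; ring_nf
  rw [h2]
  field_simp

/-- For `|d| < β`, `sinh (K d) / sinh (K β) → 0` as `K → ∞`. -/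
private lemma sinh_ratio_tendsto_zero (d β : ℝ) (hd : |d| < β) :
    Filter.Tendsto (fun K : ℝ => Real.sinh (K * d) / Real.sinh (K * β))
      Filter.atTop (nhds 0) := by
  have hβ : 0 < β := lt_of_le_of_lt (abs_nonneg d) hd
  have hg : Filter.Tendsto (fun K : ℝ => Real.exp (K * (|d| - β)) * (1 - Real.exp (-2))⁻¹)
      Filter.atTop (nhds 0) := by
    have h1 : Filter.Tendsto (fun K : ℝ => K * (|d| - β)) Filter.atTop Filter.atBot := by
      have := Filter.Tendsto.atTop_mul_const (r := β - |d|) (by linarith) (tendsto_id (α := ℝ))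
      have := Filter.tendsto_neg_atBot_iff.mpr this
      refine this.congr fun K => by simp only [id_eq]; ring
    have h2 := Real.tendsto_exp_atBot.comp h1
    simpa using h2.mul_const _
  apply squeeze_zero_norm' _ hg
  filter_upwards [Filter.eventually_ge_atTop (1 / β)] with K hK
  have hK0 : 0 < K := lt_of_lt_of_le (by positivity) hK
  have hKβ : 1 ≤ K * β := by
    rw [div_le_iff₀ hβ] at hK
    linarith
  have hsβ : 0 < Real.sinh (K * β) := Real.sinh_pos_iff.2 (by nlinarith)
  rw [norm_div, Real.norm_eq_abs, Real.norm_eq_abs, abs_of_pos hsβ, Real.abs_sinh]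
  have habs : |K * d| = K * |d| := by rw [abs_mul, abs_of_pos hK0]
  rw [habs]
  -- sinh (K|d|) ≤ exp(K|d|)/2
  have hnum : Real.sinh (K * |d|) ≤ Real.exp (K * |d|) / 2 := by
    rw [Real.sinh_eq]
    have := (Real.exp_pos (-(K * |d|))).le
    linarith
  -- sinh (Kβ) ≥ exp(Kβ) * (1 - exp(-2)) / 2
  have hden : Real.exp (K * β) * (1 - Real.exp (-2)) / 2 ≤ Real.sinh (K * β) := by
    rw [Real.sinh_eq]
    have h3 : Real.exp (-(K * β)) ≤ Real.exp (K * β) * Real.exp (-2) := by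
      rw [← Real.exp_add, Real.exp_le_exp]
      linarith
    nlinarith [Real.exp_pos (K * β)]
  have hone : (0:ℝ) < 1 - Real.exp (-2) := by
    have : Real.exp (-2 : ℝ) < 1 := by rw [Real.exp_lt_one_iff]; norm_num
    linarith
  have hden' : 0 < Real.exp (K * β) * (1 - Real.exp (-2)) / 2 :=
    div_pos (mul_pos (Real.exp_pos _) hone) two_pos
  calc Real.sinh (K * |d|) / Real.sinh (K * β)
      ≤ (Real.exp (K * |d|) / 2) / (Real.exp (K * β) * (1 - Real.exp (-2)) / 2) := by
        exact div_le_div₀ (by positivity) hnum hden' hden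
      _ = Real.exp (K * (|d| - β)) * (1 - Real.exp (-2))⁻¹ := by
        have hsplit : Real.exp (K * (|d| - β)) = Real.exp (K * |d|) / Real.exp (K * β) := by
          rw [← Real.exp_sub]; ring_nf
        rw [hsplit]
        field_simp

theorem stmt_6 (T x η ρ t : ℝ) (hT : 0 < T) (hx : 0 < x) (hη : 0 < η) (hρ : 0 < ρ)
    (ht0 : 0 < t) (htT : t ≤ T)
    (k a b c Xstar : ℝ → ℝ)
    (hk : ∀ γ : ℝ, k γ = Real.sqrt (ρ * (ρ + γ / η)))
    (ha : ∀ γ : ℝ, a γ = Real.sinh (k γ * T / 2) * (γ / η))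
    (hb : ∀ γ : ℝ, b γ = k γ * ρ * Real.cosh (k γ * T / 2) +
      (k γ) ^ 2 * Real.sinh (k γ * T / 2))
    (hc : ∀ γ : ℝ, c γ = γ / η)
    (hXstar : ∀ γ : ℝ, Xstar γ =
      x - x * (a γ + b γ * t + c γ * Real.sinh (k γ * (t - T / 2))) / (2 * a γ + b γ * T))
    (H : ℝ → ℝ → ℝ) (hH : ∀ (a₀ s : ℝ), H a₀ s = if a₀ ≤ s then 1 else 0) :
    Filter.Tendsto Xstar Filter.atTop
      (nhds (x - x / (ρ * T + 2) * (H 0 t + ρ * t + H T t))) ∧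
    (t < T → x - x / (ρ * T + 2) * (H 0 t + ρ * t + H T t) =
      x - x * (1 + ρ * t) / (ρ * T + 2)) ∧
    (t = T → x - x / (ρ * T + 2) * (H 0 t + ρ * t + H T t) = 0) := by
  have hρT : (0:ℝ) < ρ * T + 2 := by positivity
  set ℓ : ℝ := if T ≤ t then 1 else 0 with hℓ
  -- abbreviations
  set R : ℝ → ℝ := fun γ => ρ * (k γ / (γ / η)) *
    (Real.cosh (k γ * T / 2) / Real.sinh (k γ * T / 2)) + (k γ) ^ 2 / (γ / η) with hR
  set S : ℝ → ℝ := fun γ => Real.sinh (k γ * (t - T / 2)) / Real.sinh (k γ * T / 2) with hS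
  -- basic limits
  have hu : Filter.Tendsto (fun γ : ℝ => γ / η) Filter.atTop Filter.atTop :=
    Filter.Tendsto.atTop_div_const hη Filter.tendsto_id
  have hkT : Filter.Tendsto k Filter.atTop Filter.atTop := by
    have h1 : Filter.Tendsto (fun γ : ℝ => ρ * (ρ + γ / η)) Filter.atTop Filter.atTop :=
      Filter.Tendsto.const_mul_atTop hρ (Filter.tendsto_atTop_add_const_left _ ρ hu)
    exact (sqrt_tendsto_atTop.comp h1).congr fun γ => (hk γ).symm
  have hinv : Filter.Tendsto (fun γ : ℝ => (γ / η)⁻¹) Filter.atTop (nhds 0) :=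
    tendsto_inv_atTop_zero.comp hu
  -- k/u → 0
  have hku : Filter.Tendsto (fun γ : ℝ => k γ / (γ / η)) Filter.atTop (nhds 0) := by
    have hin : Filter.Tendsto
        (fun γ : ℝ => ρ * ρ * ((γ / η)⁻¹ * (γ / η)⁻¹) + ρ * (γ / η)⁻¹)
        Filter.atTop (nhds 0) := by
      have := (((hinv.mul hinv).const_mul (ρ * ρ)).add (hinv.const_mul ρ))
      simpa using this
    have hsq := (Real.continuous_sqrt.tendsto 0).comp hin
    rw [Real.sqrt_zero] at hsq
    refine hsq.congr' ?_
    filter_upwards [Filter.eventually_gt_atTop 0] with γ hγ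
    have hu0 : (0:ℝ) < γ / η := div_pos hγ hη
    have hB : (0:ℝ) ≤ ρ * ρ * ((γ / η)⁻¹ * (γ / η)⁻¹) + ρ * (γ / η)⁻¹ := by positivity
    simp only [Function.comp]
    rw [hk]
    rw [show ρ * (ρ + γ / η) =
        (ρ * ρ * ((γ / η)⁻¹ * (γ / η)⁻¹) + ρ * (γ / η)⁻¹) * (γ / η) ^ 2 by
      field_simp]
    rw [Real.sqrt_mul hB, Real.sqrt_sq hu0.le, mul_div_assoc, div_self hu0.ne', mul_one]
  -- k²/u → ρ
  have hk2u : Filter.Tendsto (fun γ : ℝ => (k γ) ^ 2 / (γ / η)) Filter.atTop (nhds ρ) := by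
    have h1 : Filter.Tendsto (fun γ : ℝ => ρ * ρ * (γ / η)⁻¹ + ρ) Filter.atTop (nhds ρ) := by
      have := (hinv.const_mul (ρ * ρ)).add_const ρ
      simpa using this
    refine h1.congr' ?_
    filter_upwards [Filter.eventually_gt_atTop 0] with γ hγ
    have hu0 : (0:ℝ) < γ / η := div_pos hγ hη
    rw [hk, Real.sq_sqrt (by positivity)]
    field_simp
  -- coth → 1
  have hcoth : Filter.Tendsto (fun γ : ℝ => Real.cosh (k γ * T / 2) / Real.sinh (k γ * T / 2))
      Filter.atTop (nhds 1) :=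
    coth_tendsto_one.comp ((hkT.atTop_mul_const hT).atTop_div_const two_pos)
  -- R → ρ
  have hRlim : Filter.Tendsto R Filter.atTop (nhds ρ) := by
    rw [hR]
    have := (((hku.const_mul ρ).mul hcoth).add hk2u)
    simpa using this
  -- S → ℓ
  have hSlim : Filter.Tendsto S Filter.atTop (nhds ℓ) := by
    rcases lt_or_eq_of_le htT with hlt | heq
    · rw [hℓ, if_neg (not_le.2 hlt), hS]
      have hd : |t - T / 2| < T / 2 := abs_lt.2 ⟨by linarith, by linarith⟩
      have := (sinh_ratio_tendsto_zero (t - T / 2) (T / 2) hd).comp hkT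
      refine this.congr fun γ => ?_
      simp only [Function.comp]
      rw [mul_div_assoc]
    · rw [hℓ, if_pos heq.ge, hS]
      refine tendsto_const_nhds.congr' ?_
      filter_upwards [hkT.eventually_gt_atTop 0] with γ hγ
      have hs : 0 < Real.sinh (k γ * T / 2) := Real.sinh_pos_iff.2 (by positivity)
      rw [show t - T / 2 = T / 2 from by rw [heq]; ring, ← mul_div_assoc, div_self hs.ne']
  -- assemble the limit
  have hQne : 2 + T * ρ ≠ 0 := by positivity
  have hfin : Filter.Tendsto (fun γ : ℝ => x - x * (1 + t * R γ + S γ) / (2 + T * R γ))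
      Filter.atTop (nhds (x - x * (1 + t * ρ + ℓ) / (2 + T * ρ))) := by
    apply Filter.Tendsto.const_sub
    exact Filter.Tendsto.div
      (tendsto_const_nhds.mul ((tendsto_const_nhds.add (hRlim.const_mul t)).add hSlim))
      (tendsto_const_nhds.add (hRlim.const_mul T)) hQne
  have hXeq : ∀ᶠ γ : ℝ in Filter.atTop,
      Xstar γ = x - x * (1 + t * R γ + S γ) / (2 + T * R γ) := by
    filter_upwards [Filter.eventually_gt_atTop 0] with γ hγ
    have hu0 : (0:ℝ) < γ / η := div_pos hγ hη
    have hkpos : 0 < k γ := by rw [hk]; exact Real.sqrt_pos.2 (by positivity)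
    have hs : 0 < Real.sinh (k γ * T / 2) := Real.sinh_pos_iff.2 (by positivity)
    have hus : (γ / η) * Real.sinh (k γ * T / 2) ≠ 0 := (mul_pos hu0 hs).ne'
    have hnum : a γ + b γ * t + c γ * Real.sinh (k γ * (t - T / 2)) =
        ((γ / η) * Real.sinh (k γ * T / 2)) * (1 + t * R γ + S γ) := by
      rw [ha, hb, hc, hR, hS]
      field_simp
    have hden : 2 * a γ + b γ * T =
        ((γ / η) * Real.sinh (k γ * T / 2)) * (2 + T * R γ) := by
      rw [ha, hb, hR]
      field_simp
    rw [hXstar, hnum, hden,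
      show x * ((γ / η) * Real.sinh (k γ * T / 2) * (1 + t * R γ + S γ)) =
        ((γ / η) * Real.sinh (k γ * T / 2)) * (x * (1 + t * R γ + S γ)) from by ring,
      mul_div_mul_left _ _ hus, mul_div_assoc]
  have hmain := hfin.congr' (hXeq.mono fun γ h => h.symm)
  -- identify the limit value
  have hH0 : H 0 t = 1 := by rw [hH, if_pos ht0.le]
  have hHT : H T t = ℓ := by rw [hH, hℓ]
  have hval : x - x * (1 + t * ρ + ℓ) / (2 + T * ρ) =
      x - x / (ρ * T + 2) * (H 0 t + ρ * t + H T t) := by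
    rw [hH0, hHT]
    field_simp
    ring
  refine ⟨hval ▸ hmain, ?_, ?_⟩
  · intro hlt
    rw [hH0, hHT, hℓ, if_neg (not_le.2 hlt)]
    field_simp
    ring
  · intro heq
    rw [hH0, hHT, hℓ, if_pos heq.ge, heq]
    field_simp
    ring
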